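/- Let K ⊆ L be a finite separable field extension with K infinite, and let x_1, ..., x_n ∈ L be elements that generate L over K, i.e. L = K(x_1, ..., x_n). Then there exists a nonzero polynomial R ∈ K[Λ_1, ..., Λ_n] such that for every (λ_1, ..., λ_n) ∈ K^n with R(λ_1, ..., λ_n) ≠ 0, the element λ_1 x_1 + ... + λ_n x_n is a primitive element, i.e. L = K(λ_1 x_1 + ... + λ_n x_n). In particular, the set of tuples (λ_1, ..., λ_n) ∈ K^n for which λ_1 x_1 + ... + λ_n x_n is primitive contains a nonempty Zariski open subset of K^n. -/
import Mathlib

/-- For a finite separable extension `L/K` with `K` infinite and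
`L = K(x_1, …, x_n)`, there is a nonzero polynomial `R ∈ K[Λ_1, …, Λ_n]` such that
whenever `R(λ_1, …, λ_n) ≠ 0`, the element `λ_1 x_1 + ⋯ + λ_n x_n` is a primitive
element of `L/K`. -/
theorem stmt_4 (K L : Type*) [Field K] [Field L] [Algebra K L]
    [FiniteDimensional K L] [Algebra.IsSeparable K L] [Infinite K]
    (n : ℕ) (x : Fin n → L)
    (hgen : IntermediateField.adjoin K (Set.range x) = ⊤) :
    ∃ R : MvPolynomial (Fin n) K, R ≠ 0 ∧
      ∀ lam : Fin n → K, MvPolynomial.eval lam R ≠ 0 →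
        IntermediateField.adjoin K {∑ i, lam i • x i} = ⊤ := by
  classical
  -- there are finitely many intermediate fields
  obtain ⟨γ, hγ⟩ := Field.exists_primitive_element K L
  haveI : Finite (IntermediateField K L) :=
    Field.finite_intermediateField_of_exists_primitive_element K L ⟨γ, hγ⟩
  haveI := Fintype.ofFinite (IntermediateField K L)
  -- for each proper intermediate field, a nonzero functional vanishing on the bad set
  have key : ∀ F : IntermediateField K L, F ≠ ⊤ →
      ∃ f : (Fin n → K) →ₗ[K] K, f ≠ 0 ∧
        ∀ lam : Fin n → K, (∑ i, lam i • x i) ∈ F → f lam = 0 := by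
    intro F hF
    set V : Submodule K (Fin n → K) :=
      { carrier := {lam | (∑ i, lam i • x i) ∈ F}
        add_mem' := by
          intro a b ha hb
          simp only [Set.mem_setOf_eq] at *
          have : (∑ i, (a + b) i • x i) = (∑ i, a i • x i) + ∑ i, b i • x i := by
            rw [← Finset.sum_add_distrib]
            exact Finset.sum_congr rfl fun i _ => by simp [add_smul]
          rw [this]; exact add_mem ha hb
        zero_mem' := by
          simp only [Set.mem_setOf_eq, Pi.zero_apply, zero_smul, Finset.sum_const_zero]
          exact F.zero_mem
        smul_mem' := by
          intro c a ha
          simp only [Set.mem_setOf_eq] at *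
          have : (∑ i, (c • a) i • x i) = (algebraMap K L c) * ∑ i, a i • x i := by
            rw [Finset.mul_sum]
            exact Finset.sum_congr rfl fun i _ => by
              simp [Pi.smul_apply, mul_smul, Algebra.smul_def, mul_assoc]
          rw [this]
          exact mul_mem (F.algebraMap_mem c) ha } with hV
    have hVlt : V < ⊤ := by
      rw [lt_top_iff_ne_top]
      intro h
      apply hF
      rw [eq_top_iff, ← hgen, IntermediateField.adjoin_le_iff, Set.range_subset_iff]
      intro i
      set e : Fin n → K := Pi.single i 1 with he
      have hmemV : e ∈ V := h ▸ Submodule.mem_top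
      have hx : (∑ j, e j • x j) ∈ F := hmemV
      rwa [Finset.sum_eq_single i (fun j _ hj => by simp [he, Pi.single_eq_of_ne hj])
        (fun h => absurd (Finset.mem_univ i) h), he, Pi.single_eq_same, one_smul] at hx
    obtain ⟨f, hf0, hfker⟩ := V.exists_le_ker_of_lt_top hVlt
    exact ⟨f, hf0, fun lam hlam => hfker hlam⟩
  -- choose such functionals
  choose f hf0 hfvan using fun F : {F : IntermediateField K L // F ≠ ⊤} => key F.1 F.2
  -- turn a functional into a linear multivariate polynomial
  let P : ({F : IntermediateField K L // F ≠ ⊤}) → MvPolynomial (Fin n) K := fun F =>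
    ∑ i, MvPolynomial.C (f F (Pi.single i 1)) * MvPolynomial.X i
  have hPeval : ∀ F lam, MvPolynomial.eval lam (P F) = f F lam := by
    intro F lam
    have : lam = ∑ i, lam i • (Pi.single i 1 : Fin n → K) := by
      ext j
      simp [Finset.sum_apply, Pi.single_apply, Finset.sum_ite_eq']
    conv_rhs => rw [this]
    simp [P, map_sum, map_smul, smul_eq_mul, mul_comm]
  have hPne : ∀ F, P F ≠ 0 := by
    intro F hP
    exact hf0 F (LinearMap.ext fun v => by rw [← hPeval F v, hP]; simp)
  refine ⟨∏ F : {F : IntermediateField K L // F ≠ ⊤}, P F, ?_, ?_⟩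
  · exact Finset.prod_ne_zero_iff.mpr fun F _ => hPne F
  · intro lam hlam
    by_contra htop
    have hmem : (∑ i, lam i • x i) ∈ IntermediateField.adjoin K {∑ i, lam i • x i} :=
      IntermediateField.subset_adjoin K _ rfl
    have := hfvan ⟨_, htop⟩ lam hmem
    rw [MvPolynomial.eval_prod] at hlam
    exact hlam (Finset.prod_eq_zero (Finset.mem_univ ⟨_, htop⟩) (by rw [hPeval]; exact this))
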